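/- Let (V, g, J, ω) be a Hermitian vector space of real dimension 6 with Kähler form ω, and let ψ be a real 3-form of type (3,0)+(0,3). Then for all X ∈ V: ω ∧ ι_X ψ = -(JX)♭ ∧ ψ, where (JX)♭ = g(JX, ·). -/

import Mathlib

set_option maxHeartbeats 1000000

open scoped RealInnerProductSpace

/-- The wedge product of a 1-form with a 3-form (shuffle/determinant convention),
written pointwise. -/
def wedge13 {V : Type*} [AddCommGroup V] [Module ℝ V]
    (η : V → ℝ) (ψ : V [⋀^Fin 3]→ₗ[ℝ] ℝ) : V → V → V → V → ℝ :=
  fun a b c d =>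
    η a * ψ ![b, c, d] - η b * ψ ![a, c, d] + η c * ψ ![a, b, d] - η d * ψ ![a, b, c]

/-- The wedge product of two 2-forms (shuffle/determinant convention), pointwise. -/
def wedge22 {V : Type*} [AddCommGroup V] [Module ℝ V]
    (α β : V → V → ℝ) : V → V → V → V → ℝ :=
  fun a b c d =>
    α a b * β c d - α a c * β b d + α a d * β b c
      + α b c * β a d - α b d * β a c + α c d * β a b

section Aux
variable {V : Type*} [AddCommGroup V] [Module ℝ V]

theorem upd0 (a b c x : V) : Function.update ![a,b,c] 0 x = ![x,b,c] := by
  funext i; fin_cases i <;> simp [Function.update]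
theorem upd1 (a b c x : V) : Function.update ![a,b,c] 1 x = ![a,x,c] := by
  funext i; fin_cases i <;> simp [Function.update]
theorem upd2 (a b c x : V) : Function.update ![a,b,c] 2 x = ![a,b,x] := by
  funext i; fin_cases i <;> simp [Function.update]

variable (ψ : V [⋀^Fin 3]→ₗ[ℝ] ℝ)

theorem psi_add0 (a b c x : V) : ψ ![a + x, b, c] = ψ ![a,b,c] + ψ ![x,b,c] := by
  have := ψ.toMultilinearMap.map_update_add ![a,b,c] 0 a x
  simpa [upd0] using this
theorem psi_add1 (a b c x : V) : ψ ![a, b + x, c] = ψ ![a,b,c] + ψ ![a,x,c] := by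
  have := ψ.toMultilinearMap.map_update_add ![a,b,c] 1 b x
  simpa [upd1] using this
theorem psi_add2 (a b c x : V) : ψ ![a, b, c + x] = ψ ![a,b,c] + ψ ![a,b,x] := by
  have := ψ.toMultilinearMap.map_update_add ![a,b,c] 2 c x
  simpa [upd2] using this
theorem psi_smul0 (r : ℝ) (a b c : V) : ψ ![r • a, b, c] = r * ψ ![a,b,c] := by
  have := ψ.toMultilinearMap.map_update_smul ![a,b,c] 0 r a
  simpa [upd0] using this
theorem psi_smul1 (r : ℝ) (a b c : V) : ψ ![a, r • b, c] = r * ψ ![a,b,c] := by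
  have := ψ.toMultilinearMap.map_update_smul ![a,b,c] 1 r b
  simpa [upd1] using this
theorem psi_smul2 (r : ℝ) (a b c : V) : ψ ![a, b, r • c] = r * ψ ![a,b,c] := by
  have := ψ.toMultilinearMap.map_update_smul ![a,b,c] 2 r c
  simpa [upd2] using this
theorem psi_neg0 (a b c : V) : ψ ![-a, b, c] = -ψ ![a,b,c] := by
  have := psi_smul0 ψ (-1) a b c; simpa using this
theorem psi_neg1 (a b c : V) : ψ ![a, -b, c] = -ψ ![a,b,c] := by
  have := psi_smul1 ψ (-1) a b c; simpa using this
theorem psi_neg2 (a b c : V) : ψ ![a, b, -c] = -ψ ![a,b,c] := by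
  have := psi_smul2 ψ (-1) a b c; simpa using this

theorem psi_swap01 (a b c : V) : ψ ![b, a, c] = -ψ ![a,b,c] := by
  have := ψ.map_swap ![a,b,c] (i := 0) (j := 1) (by decide)
  have h2 : (![a,b,c] ∘ Equiv.swap (0:Fin 3) 1) = ![b,a,c] := by
    funext i; fin_cases i <;> simp [Equiv.swap_apply_def]
  rw [h2] at this; linarith
theorem psi_swap12 (a b c : V) : ψ ![a, c, b] = -ψ ![a,b,c] := by
  have := ψ.map_swap ![a,b,c] (i := 1) (j := 2) (by decide)
  have h2 : (![a,b,c] ∘ Equiv.swap (1:Fin 3) 2) = ![a,c,b] := by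
    funext i; fin_cases i <;> simp [Equiv.swap_apply_def]
  rw [h2] at this; linarith
theorem psi_eq01 (a c : V) : ψ ![a, a, c] = 0 :=
  ψ.map_eq_zero_of_eq ![a,a,c] (i := 0) (j := 1) rfl (by decide)
theorem psi_eq02 (a b : V) : ψ ![a, b, a] = 0 :=
  ψ.map_eq_zero_of_eq ![a,b,a] (i := 0) (j := 2) rfl (by decide)
theorem psi_eq12 (a b : V) : ψ ![a, b, b] = 0 :=
  ψ.map_eq_zero_of_eq ![a,b,b] (i := 1) (j := 2) rfl (by decide)

end Aux

theorem stmt13 (V : Type*) [NormedAddCommGroup V] [InnerProductSpace ℝ V]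
    (hdim : Module.finrank ℝ V = 6)
    (J : V →ₗ[ℝ] V) (hJ2 : J ∘ₗ J = -LinearMap.id)
    (hJo : ∀ x y : V, ⟪J x, J y⟫ = ⟪x, y⟫)
    (ψ : V [⋀^Fin 3]→ₗ[ℝ] ℝ)
    (hψ : ∀ X Y Z : V, ψ ![J X, J Y, Z] = -ψ ![X, Y, Z]) :
    ∀ X a b c d : V,
      wedge22 (fun u v => ⟪J u, v⟫) (fun u v => ψ ![X, u, v]) a b c d
        = -wedge13 (fun u => ⟪J X, u⟫) ψ a b c d := by
  intro X a b c d
  have JJ : ∀ v : V, J (J v) = -v := by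
    intro v
    have := LinearMap.ext_iff.mp hJ2 v
    simpa using this
  have skew : ∀ u v : V, ⟪u, J v⟫ = -⟪J u, v⟫ := by
    intro u v
    have h1 : ⟪J u, J (J v)⟫ = ⟪u, J v⟫ := hJo u (J v)
    rw [JJ v] at h1
    rw [← h1, inner_neg_right]
  -- J-pair rules for ψ
  have pJ01 : ∀ u v t : V, ψ ![J u, J v, t] = -ψ ![u,v,t] := hψ
  have pJ02 : ∀ u v t : V, ψ ![J u, v, J t] = -ψ ![u,v,t] := by
    intro u v t
    rw [psi_swap12 ψ (J u) (J t) v, pJ01, psi_swap12 ψ u t v]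
  have pJ12 : ∀ u v t : V, ψ ![u, J v, J t] = -ψ ![u,v,t] := by
    intro u v t
    rw [psi_swap01 ψ (J v) u (J t), pJ02, psi_swap01 ψ v u t]
  -- complex module structure via J
  have hI : (J : Module.End ℝ V) * J = -1 := hJ2
  letI m : Module ℂ V := Module.compHom V (Complex.liftAux (J : Module.End ℝ V) hI).toRingHom
  have hsmul : ∀ (zc : ℂ) (v : V), zc • v = zc.re • v + zc.im • J v := by
    intro zc v
    show (Complex.liftAux (J : Module.End ℝ V) hI zc) v = _
    rw [Complex.liftAux_apply]
    simp [Module.algebraMap_end_apply]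
  letI : IsScalarTower ℝ ℂ V := ⟨by
    intro r zc v
    simp only [hsmul, Complex.real_smul, Complex.mul_re, Complex.mul_im,
      Complex.ofReal_re, Complex.ofReal_im, smul_add]
    module⟩
  haveI : FiniteDimensional ℝ V := Module.finite_of_finrank_pos (by omega)
  haveI : Module.Finite ℂ V := Module.Finite.of_restrictScalars_finite ℝ ℂ V
  have hfr : Module.finrank ℂ V = 3 := by
    have h2 := Module.finrank_mul_finrank ℝ ℂ V
    rw [Complex.finrank_real_complex, hdim] at h2
    omega
  set b : Module.Basis (Fin 3) ℂ V := Module.finBasisOfFinrankEq ℂ V hfr with hb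
  set z : V → Fin 3 → ℂ := fun u j => b.repr u j with hzdef
  have hrepr : ∀ u : V, u = z u 0 • b 0 + z u 1 • b 1 + z u 2 • b 2 := by
    intro u
    have := b.sum_repr u
    rw [Fin.sum_univ_three] at this
    exact this.symm
  -- the complex 3-form Θ
  set Th : V → V → V → ℂ := fun u v t =>
    (ψ ![u,v,t] : ℂ) + Complex.I * (ψ ![J u, J v, J t] : ℂ) with hThdef
  have Th_def : ∀ u v t : V, Th u v t
      = (ψ ![u,v,t] : ℂ) + Complex.I * (ψ ![J u, J v, J t] : ℂ) := fun _ _ _ => rfl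
  have Th_re : ∀ u v t : V, (Th u v t).re = ψ ![u,v,t] := by
    intro u v t; simp [Th_def]
  have ThI0 : ∀ u v t : V, Th (J u) v t = Complex.I * Th u v t := by
    intro u v t
    apply Complex.ext <;>
      simp [Th_def, Complex.add_re, Complex.add_im, Complex.mul_re, Complex.mul_im,
        JJ, psi_neg0, pJ12]
  have ThI1 : ∀ u v t : V, Th u (J v) t = Complex.I * Th u v t := by
    intro u v t
    apply Complex.ext <;>
      simp [Th_def, Complex.add_re, Complex.add_im, Complex.mul_re, Complex.mul_im,
        JJ, psi_neg1, pJ02]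
  have ThI2 : ∀ u v t : V, Th u v (J t) = Complex.I * Th u v t := by
    intro u v t
    apply Complex.ext <;>
      simp [Th_def, Complex.add_re, Complex.add_im, Complex.mul_re, Complex.mul_im,
        JJ, psi_neg2, pJ01]
  have Th_add0 : ∀ u u' v t : V, Th (u + u') v t = Th u v t + Th u' v t := by
    intro u u' v t
    simp only [Th_def, map_add, psi_add0]
    push_cast; ring
  have Th_add1 : ∀ u v v' t : V, Th u (v + v') t = Th u v t + Th u v' t := by
    intro u v v' t
    simp only [Th_def, map_add, psi_add1]
    push_cast; ring
  have Th_add2 : ∀ u v t t' : V, Th u v (t + t') = Th u v t + Th u v t' := by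
    intro u v t t'
    simp only [Th_def, map_add, psi_add2]
    push_cast; ring
  have Th_smulR0 : ∀ (r : ℝ) (u v t : V), Th (r • u) v t = (r : ℂ) * Th u v t := by
    intro r u v t
    simp only [Th_def, map_smul, psi_smul0]
    push_cast; ring
  have Th_smulR1 : ∀ (r : ℝ) (u v t : V), Th u (r • v) t = (r : ℂ) * Th u v t := by
    intro r u v t
    simp only [Th_def, map_smul, psi_smul1]
    push_cast; ring
  have Th_smulR2 : ∀ (r : ℝ) (u v t : V), Th u v (r • t) = (r : ℂ) * Th u v t := by
    intro r u v t
    simp only [Th_def, map_smul, psi_smul2]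
    push_cast; ring
  have Th_smulC0 : ∀ (zc : ℂ) (u v t : V), Th (zc • u) v t = zc * Th u v t := by
    intro zc u v t
    rw [hsmul, Th_add0, Th_smulR0, Th_smulR0, ThI0]
    rw [show ((zc.re : ℂ) * Th u v t + (zc.im : ℂ) * (Complex.I * Th u v t))
        = ((zc.re : ℂ) + (zc.im : ℂ) * Complex.I) * Th u v t by ring, Complex.re_add_im]
  have Th_smulC1 : ∀ (zc : ℂ) (u v t : V), Th u (zc • v) t = zc * Th u v t := by
    intro zc u v t
    rw [hsmul, Th_add1, Th_smulR1, Th_smulR1, ThI1]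
    rw [show ((zc.re : ℂ) * Th u v t + (zc.im : ℂ) * (Complex.I * Th u v t))
        = ((zc.re : ℂ) + (zc.im : ℂ) * Complex.I) * Th u v t by ring, Complex.re_add_im]
  have Th_smulC2 : ∀ (zc : ℂ) (u v t : V), Th u v (zc • t) = zc * Th u v t := by
    intro zc u v t
    rw [hsmul, Th_add2, Th_smulR2, Th_smulR2, ThI2]
    rw [show ((zc.re : ℂ) * Th u v t + (zc.im : ℂ) * (Complex.I * Th u v t))
        = ((zc.re : ℂ) + (zc.im : ℂ) * Complex.I) * Th u v t by ring, Complex.re_add_im]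
  have Tsw01 : ∀ u v t : V, Th v u t = -Th u v t := by
    intro u v t
    simp only [Th_def, psi_swap01 ψ u v t, psi_swap01 ψ (J u) (J v) (J t)]
    push_cast; ring
  have Tsw12 : ∀ u v t : V, Th u t v = -Th u v t := by
    intro u v t
    simp only [Th_def, psi_swap12 ψ u v t, psi_swap12 ψ (J u) (J v) (J t)]
    push_cast; ring
  have Tz01 : ∀ u t : V, Th u u t = 0 := by
    intro u t; simp [Th_def, psi_eq01]
  have Tz02 : ∀ u v : V, Th u v u = 0 := by
    intro u v; simp [Th_def, psi_eq02]
  have Tz12 : ∀ u v : V, Th u v v = 0 := by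
    intro u v; simp [Th_def, psi_eq12]
  set cc : ℂ := Th (b 0) (b 1) (b 2) with hcc
  have v021 : Th (b 0) (b 2) (b 1) = -cc := by rw [Tsw12, hcc]
  have v102 : Th (b 1) (b 0) (b 2) = -cc := by rw [Tsw01, hcc]
  have v120 : Th (b 1) (b 2) (b 0) = cc := by
    rw [show Th (b 1) (b 2) (b 0) = -Th (b 1) (b 0) (b 2) from Tsw12 (b 1) (b 0) (b 2), v102]; ring
  have v201 : Th (b 2) (b 0) (b 1) = cc := by
    rw [show Th (b 2) (b 0) (b 1) = -Th (b 0) (b 2) (b 1) from Tsw01 (b 0) (b 2) (b 1), v021]; ring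
  have v210 : Th (b 2) (b 1) (b 0) = -cc := by
    rw [show Th (b 2) (b 1) (b 0) = -Th (b 1) (b 2) (b 0) from Tsw01 (b 1) (b 2) (b 0), v120]
  set DD : V → V → V → ℂ := fun u v t =>
    z u 0 * (z v 1 * z t 2 - z v 2 * z t 1)
      - z u 1 * (z v 0 * z t 2 - z v 2 * z t 0)
      + z u 2 * (z v 0 * z t 1 - z v 1 * z t 0) with hDD
  have key : ∀ u v t : V, Th u v t = cc * DD u v t := by
    intro u v t
    conv_lhs => rw [hrepr u, hrepr v, hrepr t]
    simp only [Th_add0, Th_add1, Th_add2, Th_smulC0, Th_smulC1, Th_smulC2]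
    simp only [Tz01, Tz02, Tz12, v021, v102, v120, v201, v210, ← hcc]
    simp only [hDD]
    ring
  have PSI : ∀ u v t : V, ψ ![u,v,t] = (cc * DD u v t).re := by
    intro u v t
    rw [← key, Th_re]
  -- the sesquilinear form
  set hh : V → V → ℂ := fun u v => (⟪u,v⟫ : ℂ) + Complex.I * (⟪J u, v⟫ : ℂ) with hhdef
  have hh_im : ∀ u v : V, (hh u v).im = ⟪J u, v⟫ := by
    intro u v; simp [hhdef]
  have hh_addl : ∀ u u' v : V, hh (u + u') v = hh u v + hh u' v := by
    intro u u' v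
    simp only [hhdef, map_add, inner_add_left]
    push_cast; ring
  have hh_addr : ∀ u v v' : V, hh u (v + v') = hh u v + hh u v' := by
    intro u v v'
    simp only [hhdef, inner_add_right]
    push_cast; ring
  have hh_smulCl : ∀ (zc : ℂ) (u v : V), hh (zc • u) v = (starRingEnd ℂ) zc * hh u v := by
    intro zc u v
    rw [hsmul]
    have l1 : ⟪(zc.re • u + zc.im • J u : V), v⟫ = zc.re * ⟪u,v⟫ + zc.im * ⟪J u, v⟫ := by
      simp [inner_add_left, real_inner_smul_left]
    have l2 : ⟪J (zc.re • u + zc.im • J u), v⟫ = zc.re * ⟪J u, v⟫ - zc.im * ⟪u, v⟫ := by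
      simp only [map_add, map_smul, inner_add_left, real_inner_smul_left, JJ, inner_neg_left]
      ring
    simp only [hhdef, l1, l2]
    rw [Complex.ext_iff]
    constructor <;>
      simp [Complex.add_re, Complex.add_im, Complex.mul_re, Complex.mul_im] <;> ring
  have hh_smulCr : ∀ (zc : ℂ) (u v : V), hh u (zc • v) = zc * hh u v := by
    intro zc u v
    rw [hsmul]
    have l1 : ⟪u, (zc.re • v + zc.im • J v : V)⟫ = zc.re * ⟪u,v⟫ - zc.im * ⟪J u, v⟫ := by
      simp only [inner_add_right, real_inner_smul_right, skew]
      ring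
    have l2 : ⟪J u, (zc.re • v + zc.im • J v : V)⟫ = zc.re * ⟪J u, v⟫ + zc.im * ⟪u, v⟫ := by
      simp only [inner_add_right, real_inner_smul_right, skew u v, JJ, inner_neg_right, hJo]
      try ring
    simp only [hhdef, l1, l2]
    rw [Complex.ext_iff]
    constructor <;>
      simp [Complex.add_re, Complex.add_im, Complex.mul_re, Complex.mul_im] <;> try ring
  set H : Fin 3 → Fin 3 → ℂ := fun j k => hh (b j) (b k) with hHdef
  have Hval : ∀ j k : Fin 3, hh (b j) (b k) = H j k := fun _ _ => rfl
  set SS : V → V → ℂ := fun u v =>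
    (starRingEnd ℂ) (z u 0) * (z v 0 * H 0 0 + z v 1 * H 0 1 + z v 2 * H 0 2)
      + (starRingEnd ℂ) (z u 1) * (z v 0 * H 1 0 + z v 1 * H 1 1 + z v 2 * H 1 2)
      + (starRingEnd ℂ) (z u 2) * (z v 0 * H 2 0 + z v 1 * H 2 1 + z v 2 * H 2 2) with hSS
  have key2 : ∀ u v : V, hh u v = SS u v := by
    intro u v
    conv_lhs => rw [hrepr u, hrepr v]
    simp only [hh_addl, hh_addr, hh_smulCl, hh_smulCr, Hval]
    simp only [hSS]
    ring
  have OM : ∀ u v : V, ⟪J u, v⟫ = (SS u v).im := by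
    intro u v
    rw [← key2, hh_im]
  have hconj : ∀ j k : Fin 3, (starRingEnd ℂ) (H j k) = H k j := by
    intro j k
    have e1 : (⟪(b k : V), b j⟫ : ℝ) = ⟪b j, b k⟫ := real_inner_comm _ _
    have e2 : (⟪J (b k), b j⟫ : ℝ) = -⟪J (b j), b k⟫ := by
      rw [real_inner_comm, skew]
    simp only [hHdef, hhdef, map_add, map_mul, Complex.conj_ofReal, Complex.conj_I, e1, e2]
    push_cast; ring
  have imC : ∀ w : ℂ, ((w.im : ℝ) : ℂ) = (w - (starRingEnd ℂ) w) / (2*Complex.I) := by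
    intro w
    rw [Complex.sub_conj]
    push_cast
    field_simp
  have reC : ∀ w : ℂ, ((w.re : ℝ) : ℂ) = (w + (starRingEnd ℂ) w) / 2 := by
    intro w
    rw [Complex.add_conj]
    push_cast
    ring
  simp only [wedge22, wedge13]
  simp only [OM, PSI]
  rw [← sub_eq_zero, ← Complex.ofReal_inj]
  push_cast
  simp only [imC, reC]
  simp only [hSS, hDD]
  simp only [map_add, map_sub, map_mul, Complex.conj_conj, hconj]
  field_simp
  ring
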